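/- Let a1 ≥ a2 > 0, b1 ≥ b2 > 0, c2 > c1 ≥ 0 with a2·b2 > c2², and 1 ≤ p ≤ 2. Set y = (c1+c2)/2, A(h) = [[a1, y+h],[y+h, b1]], B(h) = [[a2, y+h],[y+h, b2]], and f(h) = Tr(A(h)^p) + Tr(B(−h)^p) − Tr(A(−h)^p) − Tr(B(h)^p) for h ∈ [0, c2 − y]. Then f(h) ≤ 0 for all h ∈ [0, c2 − y]; in particular Tr(A(c2−y)^p) + Tr(B(y−c2)^p) ≤ Tr(A(y−c2)^p) + Tr(B(c2−y)^p). -/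

import Mathlib

open scoped Matrix

lemma herm2 (a b c : ℝ) : (!![a, c; c, b]).IsHermitian := by
  ext i j
  fin_cases i <;> fin_cases j <;> simp [Matrix.conjTranspose_apply]

/-- `Tr K^p` for a symmetric real `2×2` matrix, via the spectral functional calculus. -/
noncomputable def trPow {K : Matrix (Fin 2) (Fin 2) ℝ} (hK : K.IsHermitian) (p : ℝ) : ℝ :=
  ∑ i, hK.eigenvalues i ^ p

lemma my_trace_eq {n : Type*} [Fintype n] [DecidableEq n] {A : Matrix n n ℝ}
    (hA : A.IsHermitian) : A.trace = ∑ i, hA.eigenvalues i := by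
  conv_lhs => rw [hA.spectral_theorem, Unitary.conjStarAlgAut_apply]
  rw [Matrix.trace_mul_cycle,
    show (star (hA.eigenvectorUnitary : Matrix n n ℝ)) * (hA.eigenvectorUnitary : Matrix n n ℝ)
      = 1 from Unitary.coe_star_mul_self _, Matrix.one_mul, Matrix.trace_diagonal]
  simp

lemma trPow_eq (p a b c : ℝ) :
    trPow (herm2 a b c) p =
      ((a + b) / 2 + Real.sqrt (((a - b) / 2) ^ 2 + c ^ 2)) ^ p +
        ((a + b) / 2 - Real.sqrt (((a - b) / 2) ^ 2 + c ^ 2)) ^ p := by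
  set m := (a + b) / 2 with hm
  set r := Real.sqrt (((a - b) / 2) ^ 2 + c ^ 2) with hrdef
  have hr : r ^ 2 = ((a - b) / 2) ^ 2 + c ^ 2 := Real.sq_sqrt (by positivity)
  set hK := herm2 a b c with hKdef
  have hsum : hK.eigenvalues 0 + hK.eigenvalues 1 = a + b := by
    have h1 := my_trace_eq hK
    rw [Matrix.trace_fin_two_of, Fin.sum_univ_two] at h1
    linarith
  have hprod : hK.eigenvalues 0 * hK.eigenvalues 1 = a * b - c ^ 2 := by
    have h1 := hK.det_eq_prod_eigenvalues
    rw [Matrix.det_fin_two_of, Fin.prod_univ_two] at h1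
    simp only [RCLike.ofReal_real_eq_id, id] at h1
    nlinarith [h1]
  have key : (hK.eigenvalues 0 - hK.eigenvalues 1 - 2 * r) *
      (hK.eigenvalues 0 - hK.eigenvalues 1 + 2 * r) = 0 := by
    linear_combination (hK.eigenvalues 0 + hK.eigenvalues 1 + a + b) * hsum - 4 * hprod - 4 * hr
  rw [trPow, Fin.sum_univ_two]
  rcases mul_eq_zero.mp key with h | h
  · have e0 : hK.eigenvalues 0 = m + r := by rw [hm]; linarith
    have e1 : hK.eigenvalues 1 = m - r := by rw [hm]; linarith
    rw [e0, e1]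
  · have e0 : hK.eigenvalues 0 = m - r := by rw [hm]; linarith
    have e1 : hK.eigenvalues 1 = m + r := by rw [hm]; linarith
    rw [e0, e1, add_comm]

lemma my_secant_anti {s : Set ℝ} {f : ℝ → ℝ} (hf : ConcaveOn ℝ s f) {a x y : ℝ}
    (ha : a ∈ s) (hx : x ∈ s) (hy : y ∈ s) (hxa : x ≠ a) (hya : y ≠ a) (hxy : x ≤ y) :
    (f y - f a) / (y - a) ≤ (f x - f a) / (x - a) := by
  have h1 := hf.neg.secant_mono ha hx hy hxa hya hxy
  simp only [Pi.neg_apply] at h1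
  have e1 : (-f x - -f a) / (x - a) = -((f x - f a) / (x - a)) := by ring
  have e2 : (-f y - -f a) / (y - a) = -((f y - f a) / (y - a)) := by ring
  rw [e1, e2] at h1
  linarith

lemma my_flip (A B u w : ℝ) : (A - B) / (u - w) = (B - A) / (w - u) := by
  rcases eq_or_ne u w with h | h
  · simp [h]
  · rw [div_eq_div_iff (sub_ne_zero.mpr h) (sub_ne_zero.mpr (Ne.symm h))]; ring

lemma slope_chain {f : ℝ → ℝ} (hf : ConcaveOn ℝ (Set.Ici 0) f) {A B C D : ℝ}
    (hA : 0 ≤ A) (hC : 0 ≤ C) (hAB : A < B) (hCD : C < D) (hAC : A ≤ C) (hBD : B ≤ D) :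
    (f D - f C) / (D - C) ≤ (f B - f A) / (B - A) := by
  have hB : 0 ≤ B := hA.trans hAB.le
  have hD : 0 ≤ D := hC.trans hCD.le
  have hAD : A < D := hAC.trans_lt hCD
  have s1 := my_secant_anti hf (a := D) (x := A) (y := C) hD hA hC hAD.ne hCD.ne hAC
  have s2 := my_secant_anti hf (a := A) (x := B) (y := D) hA hB hD hAB.ne' hAD.ne' hBD
  calc (f D - f C) / (D - C) = (f C - f D) / (C - D) := (my_flip _ _ _ _).symm
    _ ≤ (f A - f D) / (A - D) := s1
    _ = (f D - f A) / (D - A) := my_flip _ _ _ _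
    _ ≤ (f B - f A) / (B - A) := s2

lemma my_sqrt_tri (d1 d2 Δ x : ℝ) (h : |d1 - d2| ≤ Δ) :
    Real.sqrt (d1 ^ 2 + x ^ 2) ≤ Δ + Real.sqrt (d2 ^ 2 + x ^ 2) := by
  set r2 := Real.sqrt (d2 ^ 2 + x ^ 2) with hr2
  have hr2sq : r2 ^ 2 = d2 ^ 2 + x ^ 2 := Real.sq_sqrt (by positivity)
  have hd2 : |d2| ≤ r2 := by
    rw [← Real.sqrt_sq_eq_abs]
    exact Real.sqrt_le_sqrt (by nlinarith [sq_nonneg x])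
  have hΔ : 0 ≤ Δ := (abs_nonneg _).trans h
  have k1 : (d1 - d2) * (d1 + d2) ≤ |d1 - d2| * |d1 + d2| := by
    rw [← abs_mul]; exact le_abs_self _
  have k2 : |d1 + d2| ≤ |d1 - d2| + 2 * |d2| := by
    have e : d1 + d2 = (d1 - d2) + 2 * d2 := by ring
    rw [e]
    calc |(d1 - d2) + 2 * d2| ≤ |d1 - d2| + |2 * d2| := abs_add_le _ _
      _ = |d1 - d2| + 2 * |d2| := by rw [abs_mul]; norm_num
  have k3 : |d1 - d2| * |d1 + d2| ≤ Δ * (Δ + 2 * r2) := by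
    apply mul_le_mul h _ (abs_nonneg _) hΔ
    calc |d1 + d2| ≤ |d1 - d2| + 2 * |d2| := k2
      _ ≤ Δ + 2 * r2 := by linarith
  have hsq : d1 ^ 2 + x ^ 2 ≤ (Δ + r2) ^ 2 := by nlinarith [k1, k3]
  calc Real.sqrt (d1 ^ 2 + x ^ 2) ≤ Real.sqrt ((Δ + r2) ^ 2) := Real.sqrt_le_sqrt hsq
    _ = Δ + r2 := Real.sqrt_sq (by positivity)

lemma my_hasDeriv (p m d : ℝ) {c : ℝ} (hc : 0 < c) (hp : 1 ≤ p) :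
    HasDerivAt (fun x => (m + Real.sqrt (d ^ 2 + x ^ 2)) ^ p
        + (m - Real.sqrt (d ^ 2 + x ^ 2)) ^ p)
      (p * ((m + Real.sqrt (d ^ 2 + c ^ 2)) ^ (p - 1)
          - (m - Real.sqrt (d ^ 2 + c ^ 2)) ^ (p - 1)) * (c / Real.sqrt (d ^ 2 + c ^ 2))) c := by
  set r := Real.sqrt (d ^ 2 + c ^ 2) with hrdef
  have hrpos : 0 < r := Real.sqrt_pos.mpr (by positivity)
  have h1 : HasDerivAt (fun x : ℝ => d ^ 2 + x ^ 2) (2 * c) c := by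
    simpa using (hasDerivAt_pow 2 c).const_add (d ^ 2)
  have h2 : HasDerivAt (fun x : ℝ => Real.sqrt (d ^ 2 + x ^ 2)) (2 * c / (2 * r)) c :=
    h1.sqrt (by positivity)
  have h3 := ((h2.const_add m).rpow_const (Or.inr hp)).add
    ((h2.const_sub m).rpow_const (Or.inr hp))
  refine h3.congr_deriv ?_
  field_simp
  ring

lemma my_mono (p m1 d1 m2 d2 v : ℝ) (hp1 : 1 ≤ p) (hp2 : p ≤ 2)
    (hm : |d1 - d2| ≤ m1 - m2) (hm2 : 0 < m2)
    (h1 : d1 ^ 2 + v ^ 2 < m1 ^ 2) (h2 : d2 ^ 2 + v ^ 2 < m2 ^ 2) :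
    MonotoneOn (fun c =>
      ((m2 + Real.sqrt (d2 ^ 2 + c ^ 2)) ^ p + (m2 - Real.sqrt (d2 ^ 2 + c ^ 2)) ^ p)
        - ((m1 + Real.sqrt (d1 ^ 2 + c ^ 2)) ^ p + (m1 - Real.sqrt (d1 ^ 2 + c ^ 2)) ^ p))
      (Set.Icc 0 v) := by
  have hm1 : 0 < m1 := by
    have := abs_nonneg (d1 - d2); linarith
  have hp0 : (0:ℝ) ≤ p := by linarith
  apply monotoneOn_of_deriv_nonneg (convex_Icc 0 v)
  · apply Continuous.continuousOn
    refine Continuous.sub (Continuous.add ?_ ?_) (Continuous.add ?_ ?_) <;>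
      refine Continuous.rpow_const (by continuity) (fun _ => Or.inr hp0)
  · rw [interior_Icc]
    intro x hx
    have hd : HasDerivAt (fun c =>
        ((m2 + Real.sqrt (d2 ^ 2 + c ^ 2)) ^ p + (m2 - Real.sqrt (d2 ^ 2 + c ^ 2)) ^ p)
          - ((m1 + Real.sqrt (d1 ^ 2 + c ^ 2)) ^ p + (m1 - Real.sqrt (d1 ^ 2 + c ^ 2)) ^ p))
        _ x := (my_hasDeriv p m2 d2 hx.1 hp1).sub (my_hasDeriv p m1 d1 hx.1 hp1)
    exact hd.differentiableAt.differentiableWithinAt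
  · rw [interior_Icc]
    intro x hx
    obtain ⟨hx0, hxv⟩ := hx
    have hd : HasDerivAt (fun c =>
        ((m2 + Real.sqrt (d2 ^ 2 + c ^ 2)) ^ p + (m2 - Real.sqrt (d2 ^ 2 + c ^ 2)) ^ p)
          - ((m1 + Real.sqrt (d1 ^ 2 + c ^ 2)) ^ p + (m1 - Real.sqrt (d1 ^ 2 + c ^ 2)) ^ p))
        ((p * ((m2 + Real.sqrt (d2 ^ 2 + x ^ 2)) ^ (p - 1)
            - (m2 - Real.sqrt (d2 ^ 2 + x ^ 2)) ^ (p - 1)) * (x / Real.sqrt (d2 ^ 2 + x ^ 2)))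
          - (p * ((m1 + Real.sqrt (d1 ^ 2 + x ^ 2)) ^ (p - 1)
            - (m1 - Real.sqrt (d1 ^ 2 + x ^ 2)) ^ (p - 1)) * (x / Real.sqrt (d1 ^ 2 + x ^ 2))))
        x := (my_hasDeriv p m2 d2 hx0 hp1).sub (my_hasDeriv p m1 d1 hx0 hp1)
    rw [hd.deriv]
    set r1 := Real.sqrt (d1 ^ 2 + x ^ 2) with hr1def
    set r2 := Real.sqrt (d2 ^ 2 + x ^ 2) with hr2def
    have hr1pos : 0 < r1 := Real.sqrt_pos.mpr (by positivity)
    have hr2pos : 0 < r2 := Real.sqrt_pos.mpr (by positivity)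
    have hxx : x ^ 2 < v ^ 2 := by nlinarith
    have hr1m : r1 < m1 := (Real.sqrt_lt' hm1).mpr (by nlinarith)
    have hr2m : r2 < m2 := (Real.sqrt_lt' hm2).mpr (by nlinarith)
    have hl1 : m2 - r2 ≤ m1 - r1 := by
      have := my_sqrt_tri d1 d2 (m1 - m2) x hm; linarith
    have hl2 : m2 + r2 ≤ m1 + r1 := by
      have := my_sqrt_tri d2 d1 (m1 - m2) x (by rw [abs_sub_comm]; exact hm); linarith
    have hconc : ConcaveOn ℝ (Set.Ici 0) fun t : ℝ => t ^ (p - 1) :=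
      Real.concaveOn_rpow (by linarith) (by linarith)
    have hs := slope_chain hconc (A := m2 - r2) (B := m2 + r2) (C := m1 - r1) (D := m1 + r1)
      (by linarith) (by linarith) (by linarith) (by linarith) hl1 hl2
    have e1 : (m1 + r1) - (m1 - r1) = 2 * r1 := by ring
    have e2 : (m2 + r2) - (m2 - r2) = 2 * r2 := by ring
    rw [e1, e2] at hs
    have hmul := mul_le_mul_of_nonneg_left hs (show (0:ℝ) ≤ 2 * p * x by positivity)
    have q1 : 2 * p * x * (((m1 + r1) ^ (p - 1) - (m1 - r1) ^ (p - 1)) / (2 * r1))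
        = p * ((m1 + r1) ^ (p - 1) - (m1 - r1) ^ (p - 1)) * (x / r1) := by
      field_simp
    have q2 : 2 * p * x * (((m2 + r2) ^ (p - 1) - (m2 - r2) ^ (p - 1)) / (2 * r2))
        = p * ((m2 + r2) ^ (p - 1) - (m2 - r2) ^ (p - 1)) * (x / r2) := by
      field_simp
    rw [q1, q2] at hmul
    linarith

theorem interpolation_step (p a1 a2 b1 b2 c1 c2 : ℝ)
    (hp1 : 1 ≤ p) (hp2 : p ≤ 2)
    (ha : a1 ≥ a2) (ha2 : a2 > 0) (hb : b1 ≥ b2) (hb2 : b2 > 0)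
    (hc : c2 > c1) (hc1 : c1 ≥ 0) (hab : a2 * b2 > c2 ^ 2) :
    (∀ h ∈ Set.Icc (0 : ℝ) (c2 - (c1 + c2) / 2),
      trPow (herm2 a1 b1 ((c1 + c2) / 2 + h)) p +
          trPow (herm2 a2 b2 ((c1 + c2) / 2 - h)) p -
          trPow (herm2 a1 b1 ((c1 + c2) / 2 - h)) p -
          trPow (herm2 a2 b2 ((c1 + c2) / 2 + h)) p ≤ 0) ∧
    trPow (herm2 a1 b1 c2) p + trPow (herm2 a2 b2 c1) p ≤
      trPow (herm2 a1 b1 c1) p + trPow (herm2 a2 b2 c2) p := by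
  have hab1 : a2 * b2 ≤ a1 * b1 := mul_le_mul ha hb hb2.le (by linarith)
  have hmono := my_mono p ((a1 + b1) / 2) ((a1 - b1) / 2) ((a2 + b2) / 2) ((a2 - b2) / 2) c2
    hp1 hp2
    (abs_le.mpr ⟨by linarith, by linarith⟩)
    (by linarith)
    (by nlinarith)
    (by nlinarith)
  have first : ∀ h ∈ Set.Icc (0 : ℝ) (c2 - (c1 + c2) / 2),
      trPow (herm2 a1 b1 ((c1 + c2) / 2 + h)) p +
          trPow (herm2 a2 b2 ((c1 + c2) / 2 - h)) p -
          trPow (herm2 a1 b1 ((c1 + c2) / 2 - h)) p -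
          trPow (herm2 a2 b2 ((c1 + c2) / 2 + h)) p ≤ 0 := by
    intro h hh
    obtain ⟨hh0, hh1⟩ := hh
    have hmem1 : (c1 + c2) / 2 - h ∈ Set.Icc (0:ℝ) c2 := by
      constructor <;> [linarith; linarith]
    have hmem2 : (c1 + c2) / 2 + h ∈ Set.Icc (0:ℝ) c2 := by
      constructor <;> [linarith; linarith]
    have key := hmono hmem1 hmem2 (by linarith)
    simp only [] at key
    rw [trPow_eq, trPow_eq, trPow_eq, trPow_eq]
    linarith
  refine ⟨first, ?_⟩
  have := first (c2 - (c1 + c2) / 2) ⟨by linarith, le_refl _⟩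
  rw [show (c1 + c2) / 2 + (c2 - (c1 + c2) / 2) = c2 by ring,
    show (c1 + c2) / 2 - (c2 - (c1 + c2) / 2) = c1 by ring] at this
  linarith
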